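/- Let μ be a finite positive Borel measure on ℝ^∞ = ℕ → ℝ concentrated on (-1,1)^∞ which is a Carleson measure for H²(𝕋^∞). Then there is a constant C > 0 such that for every s ∈ (-1,1)^∞ and every d ≥ 1, μ(I_s) ≤ C ∏_{j=1}^d (1 - s_j²), where I_s = {t ∈ (-1,1)^∞ : |t_j| ≥ |s_j| and t_j s_j ≥ 0 for all j ≥ 1}. Consequently μ(I_s) ≤ C ∏_{j=1}^∞ (1 - s_j²), the infinite product being interpreted as 0 when ∑_j s_j² = ∞. -/

import Mathlib

open MeasureTheory Finset
open scoped BigOperators ENNReal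

/-- The `H²(𝕋^∞)` norm of a polynomial: `‖f‖ = (∑_κ |f_κ|²)^{1/2}`. -/
noncomputable def h2Norm (f : MvPolynomial ℕ ℂ) : ℝ :=
  Real.sqrt (∑ κ ∈ f.support, ‖MvPolynomial.coeff κ f‖ ^ 2)

/-- The generalized Carleson window
`I_s = {t ∈ (-1,1)^∞ : |t_j| ≥ |s_j| and t_j s_j ≥ 0 for all j}`. -/
def windowSet (s : ℕ → ℝ) : Set (ℕ → ℝ) :=
  {t | (∀ j, |t j| < 1) ∧ ∀ j, |s j| ≤ |t j| ∧ 0 ≤ t j * s j}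

noncomputable def Qpoly (s : ℕ → ℝ) (n : ℕ) (j : ℕ) : MvPolynomial ℕ ℂ :=
  ∑ k ∈ range (n+1), MvPolynomial.monomial (Finsupp.single j k) ((s j : ℂ) ^ k)

noncomputable def Ppoly (s : ℕ → ℝ) (n d : ℕ) : MvPolynomial ℕ ℂ :=
  ∏ j ∈ range d, Qpoly s n j

lemma eval_Ppoly (s t : ℕ → ℝ) (n d : ℕ) :
    MvPolynomial.eval (fun j => (t j : ℂ)) (Ppoly s n d) =
      ((∏ j ∈ range d, ∑ k ∈ range (n+1), (s j * t j) ^ k : ℝ) : ℂ) := by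
  simp only [Ppoly, Qpoly, map_prod, map_sum, MvPolynomial.eval_monomial]
  push_cast
  congr 1; ext j; congr 1; ext k
  rw [Finsupp.prod_single_index (by simp)]
  ring

lemma one_support : (1 : MvPolynomial ℕ ℂ).support = {0} := by
  classical
  have h1 : (1 : MvPolynomial ℕ ℂ) = MvPolynomial.monomial 0 1 := by simp
  rw [h1, MvPolynomial.support_monomial, if_neg one_ne_zero]

lemma Ppoly_bound (s : ℕ → ℝ) (n d : ℕ) :
    (∀ κ ∈ (Ppoly s n d).support, ∀ j, d ≤ j → κ j = 0) ∧
    ∑ κ ∈ (Ppoly s n d).support, ‖MvPolynomial.coeff κ (Ppoly s n d)‖ ^ 2 ≤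
      ∏ j ∈ range d, ∑ k ∈ range (n+1), (s j ^ 2) ^ k := by
  induction d with
  | zero =>
      simp only [Ppoly, range_zero, prod_empty, one_support]
      constructor
      · intro κ hκ j _
        simp only [mem_singleton] at hκ
        simp [hκ]
      · simp
  | succ d ih =>
      classical
      set f := Ppoly s n d with hf
      have hstep : Ppoly s n (d+1) = f * Qpoly s n d := by
        rw [Ppoly, prod_range_succ]; rfl
      have hcoeff : ∀ (κ0 : ℕ →₀ ℕ), κ0 d = 0 → ∀ k ∈ range (n+1),
          MvPolynomial.coeff (κ0 + Finsupp.single d k) (f * Qpoly s n d)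
            = MvPolynomial.coeff κ0 f * (s d : ℂ) ^ k := by
        intro κ0 hκ0 k hk
        rw [Qpoly, Finset.mul_sum]
        rw [MvPolynomial.coeff_sum]
        have : ∀ k' ∈ range (n+1),
            MvPolynomial.coeff (κ0 + Finsupp.single d k)
              (f * MvPolynomial.monomial (Finsupp.single d k') ((s d : ℂ) ^ k'))
            = if k' = k then MvPolynomial.coeff κ0 f * (s d : ℂ) ^ k else 0 := by
          intro k' hk'
          rw [MvPolynomial.coeff_mul_monomial']
          by_cases hkk : k' = k
          · subst hkk
            rw [if_pos (le_add_self.trans_eq rfl), if_pos rfl]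
            congr 2
            exact add_tsub_cancel_right κ0 (Finsupp.single d k')
          · rw [if_neg hkk]
            by_cases hle : Finsupp.single d k' ≤ κ0 + Finsupp.single d k
            · rw [if_pos hle]
              have hd : (κ0 + Finsupp.single d k - Finsupp.single d k') d = k - k' := by
                simp [hκ0]
              have hk'k : k' ≤ k := by
                have := hle d
                simpa [hκ0] using this
              have hlt : k' < k := lt_of_le_of_ne hk'k hkk
              have : MvPolynomial.coeff (κ0 + Finsupp.single d k - Finsupp.single d k') f = 0 := by
                by_contra hne
                have hm : (κ0 + Finsupp.single d k - Finsupp.single d k') ∈ f.support :=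
                  MvPolynomial.mem_support_iff.mpr hne
                have := ih.1 _ hm d le_rfl
                omega
              rw [this, zero_mul]
            · rw [if_neg hle]
        rw [Finset.sum_congr rfl this, Finset.sum_ite_eq' (range (n+1)) k, if_pos hk]
      have hsub : (f * Qpoly s n d).support ⊆
          (f.support ×ˢ range (n+1)).image (fun p => p.1 + Finsupp.single d p.2) := by
        intro κ hκ
        have h1 := MvPolynomial.support_mul f (Qpoly s n d) hκ
        rw [Finset.mem_add] at h1
        obtain ⟨a, ha, b, hb, rfl⟩ := h1
        have h2 : b ∈ (range (n+1)).biUnion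
            (fun k => (MvPolynomial.monomial (Finsupp.single d k) ((s d : ℂ) ^ k)).support) :=
          MvPolynomial.support_sum hb
        rw [Finset.mem_biUnion] at h2
        obtain ⟨k, hk, hbk⟩ := h2
        have h3 : b = Finsupp.single d k := by
          have := MvPolynomial.support_monomial_subset hbk
          simpa using this
        subst h3
        exact Finset.mem_image.mpr ⟨(a, k), Finset.mem_product.mpr ⟨ha, hk⟩, rfl⟩
      have hd0 : ∀ κ0 ∈ f.support, κ0 d = 0 := fun κ0 h => ih.1 κ0 h d le_rfl
      constructor
      · intro κ hκ j hj
        rw [hstep] at hκ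
        obtain ⟨p, hp, rfl⟩ := Finset.mem_image.mp (hsub hκ)
        obtain ⟨hp1, hp2⟩ := Finset.mem_product.mp hp
        have h1 : p.1 j = 0 := ih.1 p.1 hp1 j (by omega)
        have h2 : Finsupp.single d p.2 j = 0 := Finsupp.single_apply_eq_zero.mpr (by omega)
        simp [h1, h2]
      · rw [hstep]
        have hinj : ∀ p ∈ f.support ×ˢ range (n+1), ∀ q ∈ f.support ×ˢ range (n+1),
            p.1 + Finsupp.single d p.2 = q.1 + Finsupp.single d q.2 → p = q := by
          intro p hp q hq hpq
          obtain ⟨hp1, _⟩ := Finset.mem_product.mp hp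
          obtain ⟨hq1, _⟩ := Finset.mem_product.mp hq
          have h1 : p.1 d = 0 := hd0 _ hp1
          have h2 : q.1 d = 0 := hd0 _ hq1
          have hd : (p.1 + Finsupp.single d p.2) d = (q.1 + Finsupp.single d q.2) d := by
            rw [hpq]
          simp only [Finsupp.add_apply, Finsupp.single_eq_same, h1, h2, zero_add] at hd
          have : p.1 = q.1 := by
            have := hpq
            rw [hd] at this
            exact add_right_cancel this
          exact Prod.ext this hd
        calc ∑ κ ∈ (f * Qpoly s n d).support,
              ‖MvPolynomial.coeff κ (f * Qpoly s n d)‖ ^ 2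
            ≤ ∑ κ ∈ (f.support ×ˢ range (n+1)).image
                  (fun p => p.1 + Finsupp.single d p.2),
                ‖MvPolynomial.coeff κ (f * Qpoly s n d)‖ ^ 2 :=
              Finset.sum_le_sum_of_subset_of_nonneg hsub
                (fun _ _ _ => by positivity)
          _ = ∑ p ∈ f.support ×ˢ range (n+1),
                ‖MvPolynomial.coeff (p.1 + Finsupp.single d p.2)
                  (f * Qpoly s n d)‖ ^ 2 := Finset.sum_image hinj
          _ = ∑ p ∈ f.support ×ˢ range (n+1),
                ‖MvPolynomial.coeff p.1 f‖ ^ 2 * (s d ^ 2) ^ p.2 := by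
              apply Finset.sum_congr rfl
              intro p hp
              obtain ⟨hp1, hp2⟩ := Finset.mem_product.mp hp
              rw [hcoeff p.1 (hd0 _ hp1) p.2 hp2]
              have habs : (‖(s d : ℂ) ^ p.2‖) ^ 2 = (s d ^ 2) ^ p.2 := by
                rw [norm_pow, Complex.norm_real, Real.norm_eq_abs, ← pow_mul, mul_comm p.2 2, pow_mul, sq_abs]
              rw [norm_mul, mul_pow, habs]
          _ = (∑ κ ∈ f.support, ‖MvPolynomial.coeff κ f‖ ^ 2) *
                (∑ k ∈ range (n+1), (s d ^ 2) ^ k) := by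
              rw [Finset.sum_product]
              exact (Finset.sum_mul_sum (f.support) (range (n+1))
                (fun κ => ‖MvPolynomial.coeff κ f‖ ^ 2)
                (fun k => (s d ^ 2) ^ k)).symm
          _ ≤ (∏ j ∈ range d, ∑ k ∈ range (n+1), (s j ^ 2) ^ k) *
                (∑ k ∈ range (n+1), (s d ^ 2) ^ k) := by
              apply mul_le_mul_of_nonneg_right ih.2
              apply Finset.sum_nonneg
              intro k _
              positivity
          _ = ∏ j ∈ range (d+1), ∑ k ∈ range (n+1), (s j ^ 2) ^ k :=
              (prod_range_succ _ _).symm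

lemma measurable_eval (f : MvPolynomial ℕ ℂ) :
    Measurable fun t : ℕ → ℝ => MvPolynomial.eval (fun j => (t j : ℂ)) f := by
  induction f using MvPolynomial.induction_on with
  | C a => simp only [MvPolynomial.eval_C]; exact measurable_const
  | add p q hp hq => simp only [map_add]; exact hp.add hq
  | mul_X p j hp =>
      simp only [map_mul, MvPolynomial.eval_X]
      exact hp.mul (Complex.measurable_ofReal.comp (measurable_pi_apply j))

lemma measurableSet_windowSet (s : ℕ → ℝ) : MeasurableSet (windowSet s) := by
  have : windowSet s = (⋂ j, {t : ℕ → ℝ | |t j| < 1}) ∩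
      ⋂ j, ({t : ℕ → ℝ | |s j| ≤ |t j|} ∩ {t : ℕ → ℝ | 0 ≤ t j * s j}) := by
    ext t
    simp only [windowSet, Set.mem_setOf_eq, Set.mem_inter_iff, Set.mem_iInter,
      forall_and]
  rw [this]
  apply MeasurableSet.inter
  · exact MeasurableSet.iInter fun j =>
      measurableSet_lt (measurable_pi_apply j).abs measurable_const
  · exact MeasurableSet.iInter fun j =>
      ((measurableSet_le measurable_const (measurable_pi_apply j).abs).inter
        (measurableSet_le measurable_const (by fun_prop : Measurable fun t : ℕ → ℝ => t j * s j)))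

lemma eval_abs_le (f : MvPolynomial ℕ ℂ) (t : ℕ → ℝ) (ht : ∀ j, |t j| < 1) :
    ‖MvPolynomial.eval (fun j => (t j : ℂ)) f‖ ≤
      ∑ κ ∈ f.support, ‖MvPolynomial.coeff κ f‖ := by
  rw [MvPolynomial.eval_eq]
  refine (norm_sum_le _ _).trans (Finset.sum_le_sum fun κ hκ => ?_)
  rw [norm_mul]
  have h1 : ‖∏ i ∈ κ.support, ((t i : ℂ)) ^ κ i‖ ≤ 1 := by
    rw [norm_prod]
    refine Finset.prod_le_one (fun i _ => by positivity) (fun i _ => ?_)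
    rw [norm_pow, Complex.norm_real, Real.norm_eq_abs]
    exact pow_le_one₀ (abs_nonneg _) (le_of_lt (ht i))
  calc ‖MvPolynomial.coeff κ f‖ * ‖∏ i ∈ κ.support, ((t i : ℂ)) ^ κ i‖
      ≤ ‖MvPolynomial.coeff κ f‖ * 1 :=
        mul_le_mul_of_nonneg_left h1 (norm_nonneg _)
    _ = _ := mul_one _

lemma key_ineq (μ : Measure (ℕ → ℝ)) [IsFiniteMeasure μ]
    (hconc : μ {t | ¬ ∀ j, |t j| < 1} = 0)
    (C0 : ℝ) (hC0 : 0 < C0)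
    (hCar : ∀ f : MvPolynomial ℕ ℂ,
      ∫ t, ‖MvPolynomial.eval (fun j => (t j : ℂ)) f‖ ^ 2 ∂μ ≤
        C0 * h2Norm f ^ 2)
    (s : ℕ → ℝ) (hs : ∀ j, |s j| < 1) (d : ℕ) :
    (μ (windowSet s)).toReal ≤ C0 * ∏ j ∈ range d, (1 - s j ^ 2) := by
  set m := (μ (windowSet s)).toReal with hm
  have hm0 : 0 ≤ m := ENNReal.toReal_nonneg
  have hx1 : ∀ j, s j ^ 2 < 1 := by
    intro j
    have h := hs j
    nlinarith [abs_nonneg (s j), sq_abs (s j)]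
  have hA1 : ∀ n, (1:ℝ) ≤ ∏ j ∈ range d, ∑ k ∈ range (n+1), (s j ^ 2) ^ k := by
    intro n
    have h1 : ∀ j ∈ range d, (1:ℝ) ≤ ∑ k ∈ range (n+1), (s j ^ 2) ^ k := by
      intro j _
      have h := Finset.single_le_sum (f := fun k => (s j ^ 2) ^ k)
        (fun k _ => by positivity) (Finset.mem_range.mpr (Nat.succ_pos n))
      simpa using h
    have h2 := Finset.prod_le_prod (f := fun _ => (1:ℝ))
      (fun j _ => zero_le_one) h1
    simpa using h2
  have main_n : ∀ n, m * (∏ j ∈ range d, ∑ k ∈ range (n+1), (s j ^ 2) ^ k) ≤ C0 := by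
    intro n
    set A := ∏ j ∈ range d, ∑ k ∈ range (n+1), (s j ^ 2) ^ k with hA
    have hApos : (0:ℝ) < A := lt_of_lt_of_le one_pos (hA1 n)
    set P := Ppoly s n d with hP
    have hh2 : h2Norm P ^ 2 ≤ A := by
      rw [h2Norm, Real.sq_sqrt (Finset.sum_nonneg fun κ _ => by positivity)]
      exact (Ppoly_bound s n d).2
    have hae : ∀ᵐ t ∂μ, ∀ j, |t j| < 1 := ae_iff.mpr hconc
    set g := fun t : ℕ → ℝ =>
      ‖MvPolynomial.eval (fun j => (t j : ℂ)) P‖ ^ 2 with hg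
    have hg_meas : Measurable g :=
      ((continuous_norm.measurable.comp (measurable_eval P)).pow_const 2)
    have hg_int : Integrable g μ := by
      refine Integrable.mono' (integrable_const
        ((∑ κ ∈ P.support, ‖MvPolynomial.coeff κ P‖) ^ 2))
        hg_meas.aestronglyMeasurable ?_
      filter_upwards [hae] with t ht
      rw [Real.norm_eq_abs, abs_of_nonneg (by positivity)]
      exact pow_le_pow_left₀ (norm_nonneg _) (eval_abs_le P t ht) 2
    have hlow : ∀ t ∈ windowSet s, A ^ 2 ≤ g t := by
      intro t ht
      obtain ⟨ht1, ht2⟩ := ht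
      have hr : A ≤ ∏ j ∈ range d, ∑ k ∈ range (n+1), (s j * t j) ^ k := by
        apply Finset.prod_le_prod
        · intro j _
          apply Finset.sum_nonneg
          intro k _
          positivity
        · intro j _
          apply Finset.sum_le_sum
          intro k _
          have h2 := (ht2 j).1
          have h3 := (ht2 j).2
          have hst : s j ^ 2 ≤ s j * t j := by
            have he : s j * t j = |s j| * |t j| := by
              rw [← abs_mul]
              rw [abs_of_nonneg (by linarith [mul_comm (t j) (s j)] : 0 ≤ s j * t j)]
            have : |s j| * |s j| ≤ |s j| * |t j| :=
              mul_le_mul_of_nonneg_left h2 (abs_nonneg _)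
            calc s j ^ 2 = |s j| * |s j| := by rw [← sq_abs]; ring
              _ ≤ |s j| * |t j| := this
              _ = s j * t j := he.symm
          exact pow_le_pow_left₀ (sq_nonneg _) hst k
      have hgt : g t = (∏ j ∈ range d, ∑ k ∈ range (n+1), (s j * t j) ^ k) ^ 2 := by
        rw [hg]
        simp only
        rw [hP, eval_Ppoly, Complex.norm_real, Real.norm_eq_abs]
        rw [abs_of_nonneg (le_trans (le_of_lt hApos) hr)]
      rw [hgt]
      exact pow_le_pow_left₀ (le_of_lt hApos) hr 2
    have h_set : A ^ 2 * m ≤ ∫ t in windowSet s, g t ∂μ :=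
      setIntegral_ge_of_const_le_real (measurableSet_windowSet s)
        (measure_ne_top μ _) hlow hg_int.integrableOn
    have h_tot : ∫ t in windowSet s, g t ∂μ ≤ ∫ t, g t ∂μ :=
      setIntegral_le_integral hg_int (Filter.Eventually.of_forall fun t => by positivity)
    have h_car : ∫ t, g t ∂μ ≤ C0 * A :=
      (hCar P).trans (mul_le_mul_of_nonneg_left hh2 (le_of_lt hC0))
    have hfin : A ^ 2 * m ≤ C0 * A := le_trans h_set (le_trans h_tot h_car)
    have : (m * A) * A ≤ C0 * A := by nlinarith
    exact le_of_mul_le_mul_right this hApos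
  -- take the limit n → ∞
  set L := ∏ j ∈ range d, (1 - s j ^ 2)⁻¹ with hL
  have hLpos : (0:ℝ) < L := Finset.prod_pos fun j _ =>
    inv_pos.mpr (by linarith [hx1 j])
  have htend : Filter.Tendsto (fun n => ∏ j ∈ range d, ∑ k ∈ range (n+1), (s j ^ 2) ^ k)
      Filter.atTop (nhds L) := by
    apply tendsto_finset_prod
    intro j _
    have h := (hasSum_geometric_of_lt_one (sq_nonneg (s j)) (hx1 j)).tendsto_sum_nat
    exact h.comp (Filter.tendsto_add_atTop_nat 1)
  have hml : m * L ≤ C0 :=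
    le_of_tendsto (htend.const_mul m) (Filter.Eventually.of_forall main_n)
  have hLP : L * ∏ j ∈ range d, (1 - s j ^ 2) = 1 := by
    rw [hL, ← Finset.prod_mul_distrib]
    apply Finset.prod_eq_one
    intro j _
    exact inv_mul_cancel₀ (by linarith [hx1 j])
  have hPpos : (0:ℝ) < ∏ j ∈ range d, (1 - s j ^ 2) :=
    Finset.prod_pos fun j _ => by linarith [hx1 j]
  have := mul_le_mul_of_nonneg_right hml (le_of_lt hPpos)
  rw [mul_assoc, hLP, mul_one] at this
  exact this

theorem stmt18 (μ : Measure (ℕ → ℝ)) [IsFiniteMeasure μ]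
    (hconc : μ {t | ¬ ∀ j, |t j| < 1} = 0)
    (hCarleson : ∃ C > 0, ∀ f : MvPolynomial ℕ ℂ,
      ∫ t, ‖MvPolynomial.eval (fun j => (t j : ℂ)) f‖ ^ 2 ∂μ ≤
        C * h2Norm f ^ 2) :
    ∃ C > 0,
      (∀ s : ℕ → ℝ, (∀ j, |s j| < 1) → ∀ d : ℕ, 1 ≤ d →
        μ (windowSet s) ≤
          ENNReal.ofReal (C * ∏ j ∈ Finset.range d, (1 - s j ^ 2))) ∧
      (∀ s : ℕ → ℝ, (∀ j, |s j| < 1) →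
        μ (windowSet s) ≤ ENNReal.ofReal (C * ∏' j : ℕ, (1 - s j ^ 2))) := by
  obtain ⟨C0, hC0, hCar⟩ := hCarleson
  have hx1 : ∀ (s : ℕ → ℝ), (∀ j, |s j| < 1) → ∀ j, s j ^ 2 < 1 := by
    intro s hs j
    have h := hs j
    nlinarith [abs_nonneg (s j), sq_abs (s j)]
  have hPpos : ∀ (s : ℕ → ℝ), (∀ j, |s j| < 1) → ∀ d : ℕ,
      (0:ℝ) < ∏ j ∈ Finset.range d, (1 - s j ^ 2) := by
    intro s hs d
    exact Finset.prod_pos fun j _ => by linarith [hx1 s hs j]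
  refine ⟨C0, hC0, ?_, ?_⟩
  · intro s hs d _
    rw [ENNReal.le_ofReal_iff_toReal_le (measure_ne_top μ _)
      (le_of_lt (mul_pos hC0 (hPpos s hs d)))]
    exact key_ineq μ hconc C0 hC0 hCar s hs d
  · intro s hs
    by_cases hmul : Multipliable (fun j => 1 - s j ^ 2)
    · have htend : Filter.Tendsto (fun d => ∏ j ∈ Finset.range d, (1 - s j ^ 2))
          Filter.atTop (nhds (∏' j : ℕ, (1 - s j ^ 2))) :=
        hmul.hasProd.tendsto_prod_nat
      have htp0 : (0:ℝ) ≤ ∏' j : ℕ, (1 - s j ^ 2) :=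
        ge_of_tendsto htend (Filter.Eventually.of_forall fun d =>
          le_of_lt (hPpos s hs d))
      rw [ENNReal.le_ofReal_iff_toReal_le (measure_ne_top μ _)
        (mul_nonneg (le_of_lt hC0) htp0)]
      refine ge_of_tendsto (htend.const_mul C0) (Filter.Eventually.of_forall fun d => ?_)
      exact key_ineq μ hconc C0 hC0 hCar s hs d
    · rw [tprod_eq_one_of_not_multipliable hmul]
      rw [ENNReal.le_ofReal_iff_toReal_le (measure_ne_top μ _)
        (by linarith : (0:ℝ) ≤ C0 * 1)]
      have := key_ineq μ hconc C0 hC0 hCar s hs 0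
      simpa using this
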